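/- The block coefficient C_B(β) = 1/2 + β/(3(β+1)) − log(β+1)/(2β) is strictly increasing in β on (0, ∞). -/

import Mathlib

lemma block_hasDerivAt (x : ℝ) (hx : 0 < x) :
    HasDerivAt (fun β : ℝ => 1/2 + β/(3*(β+1)) - Real.log (β+1)/(2*β))
      (1/(3*(x+1)^2) - 1/(2*x*(x+1)) + Real.log (x+1)/(2*x^2)) x := by
  have hx1 : (0:ℝ) < x + 1 := by linarith
  have h1 : HasDerivAt (fun β : ℝ => β/(3*(β+1)))
      ((1*(3*(x+1)) - x*3)/(3*(x+1))^2) x := by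
    have hden : HasDerivAt (fun β : ℝ => 3*(β+1)) 3 x := by
      simpa using ((hasDerivAt_id x).add_const 1).const_mul 3
    exact (hasDerivAt_id x).div hden (by positivity)
  have h2 : HasDerivAt (fun β : ℝ => Real.log (β+1)/(2*β))
      (((x+1)⁻¹*(2*x) - Real.log (x+1)*2)/(2*x)^2) x := by
    have hlog : HasDerivAt (fun β : ℝ => Real.log (β+1)) (x+1)⁻¹ x := by
      simpa [Function.comp_def] using (Real.hasDerivAt_log (by positivity)).comp x
        ((hasDerivAt_id x).add_const 1)
    have hden : HasDerivAt (fun β : ℝ => 2*β) 2 x := by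
      simpa using (hasDerivAt_id x).const_mul 2
    exact hlog.div hden (by positivity)
  have := ((h1.const_add (1/2)).sub h2)
  refine this.congr_deriv ?_
  field_simp
  ring

/-- The block coefficient `C_B(β)` is strictly increasing on `(0, ∞)`. -/
theorem block_coefficient_strictMono :
    StrictMonoOn (fun β : ℝ => 1/2 + β/(3*(β+1)) - Real.log (β+1)/(2*β))
      (Set.Ioi (0:ℝ)) := by
  apply strictMonoOn_of_deriv_pos (convex_Ioi 0)
  · intro x hx
    exact ((block_hasDerivAt x hx).differentiableAt.continuousAt).continuousWithinAt
  · rw [interior_Ioi]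
    intro x hx
    rw [Set.mem_Ioi] at hx
    rw [(block_hasDerivAt x hx).deriv]
    have hx1 : (0:ℝ) < x + 1 := by linarith
    have hL : x / (x+1) ≤ Real.log (x+1) := by
      have h := Real.add_one_le_exp (-Real.log (x+1))
      rw [Real.exp_neg, Real.exp_log hx1] at h
      rw [div_le_iff₀ hx1]
      nlinarith [mul_le_mul_of_nonneg_left h hx1.le, mul_inv_cancel₀ hx1.ne']
    have key : 1/(2*x*(x+1)) ≤ Real.log (x+1)/(2*x^2) := by
      rw [div_le_div_iff₀ (by positivity) (by positivity)]
      rw [div_le_iff₀ hx1] at hL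
      nlinarith [mul_le_mul_of_nonneg_left hL (by positivity : (0:ℝ) ≤ 2*x)]
    have hpos : (0:ℝ) < 1/(3*(x+1)^2) := by positivity
    linarith
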